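/- For a free group F on generators g_1,...,g_n and any element g in F, there exist unique elements ∂g/∂g_i in the integral group ring Z[F] such that 1 - g = Σ_{i=1}^n (1 - g_i) · (∂g/∂g_i). -/

import Mathlib

namespace FoxAux

variable {n : ℕ}

/-- Auxiliary group: pairs `(g, d)` with multiplication `(g,d)(h,e) = (gh, d·h + e)`. -/
def G (n : ℕ) := FreeGroup (Fin n) × (Fin n → MonoidAlgebra ℤ (FreeGroup (Fin n)))

noncomputable instance : Group (G n) where
  mul x y := (x.1 * y.1, fun i => x.2 i * MonoidAlgebra.of ℤ (FreeGroup (Fin n)) y.1 + y.2 i)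
  one := (1, 0)
  inv x := (x.1⁻¹, fun i => -(x.2 i * MonoidAlgebra.of ℤ (FreeGroup (Fin n)) x.1⁻¹))
  mul_assoc a b c := by
    refine Prod.ext (mul_assoc _ _ _) (funext fun i => ?_)
    show ((a.2 i * _ + b.2 i) * _ + c.2 i) = a.2 i * MonoidAlgebra.of ℤ _ (b.1 * c.1) + (b.2 i * _ + c.2 i)
    simp [map_mul, add_mul, mul_assoc, add_assoc]
  one_mul a := by
    refine Prod.ext (one_mul _) (funext fun i => ?_)
    show (0 : MonoidAlgebra ℤ (FreeGroup (Fin n))) * _ + a.2 i = a.2 i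
    rw [zero_mul, zero_add]
  mul_one a := by
    refine Prod.ext (mul_one _) (funext fun i => ?_)
    show a.2 i * MonoidAlgebra.of ℤ _ (1 : FreeGroup (Fin n)) + 0 = a.2 i
    rw [map_one, mul_one, add_zero]
  inv_mul_cancel a := by
    refine Prod.ext (inv_mul_cancel _) (funext fun i => ?_)
    show -(a.2 i * MonoidAlgebra.of ℤ _ a.1⁻¹) * MonoidAlgebra.of ℤ _ a.1 + a.2 i = 0
    rw [neg_mul, mul_assoc, ← map_mul, inv_mul_cancel, map_one, mul_one, neg_add_cancel]

theorem mul_snd (x y : G n) (i : Fin n) :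
    (x * y).2 i = x.2 i * MonoidAlgebra.of ℤ (FreeGroup (Fin n)) y.1 + y.2 i := rfl

theorem mul_fst (x y : G n) : (x * y).1 = x.1 * y.1 := rfl

/-- Projection to the first factor is a monoid hom. -/
def fstHom (n : ℕ) : G n →* FreeGroup (Fin n) where
  toFun := Prod.fst
  map_one' := rfl
  map_mul' _ _ := rfl

/-- The homomorphism computing Fox derivatives. -/
noncomputable def Φ (n : ℕ) : FreeGroup (Fin n) →* G n :=
  FreeGroup.lift (fun i => (FreeGroup.of i, Pi.single i 1))

theorem Φ_of (i : Fin n) : Φ n (FreeGroup.of i) = (FreeGroup.of i, Pi.single i 1) :=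
  FreeGroup.lift_apply_of

theorem Φ_fst (g : FreeGroup (Fin n)) : (Φ n g).1 = g := by
  have : (fstHom n).comp (Φ n) = MonoidHom.id _ := by
    apply FreeGroup.ext_hom
    intro a
    simp [fstHom, Φ_of]
    rfl
  exact congrArg (fun f => f g) this

theorem main (g : FreeGroup (Fin n)) :
    1 - MonoidAlgebra.of ℤ (FreeGroup (Fin n)) g =
      ∑ i : Fin n, (1 - MonoidAlgebra.of ℤ (FreeGroup (Fin n)) (FreeGroup.of i)) * (Φ n g).2 i := by
  have hp : ∀ i : Fin n, (pure i : FreeGroup (Fin n)) = FreeGroup.of i := fun _ => rfl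
  induction g using FreeGroup.induction_on with
  | C1 =>
      rw [map_one, map_one]
      simp [show ((1 : G n).2) = 0 from rfl]
  | of i =>
      rw [Φ_of]
      simp [Pi.single_apply, mul_ite, Finset.sum_ite_eq']
  | inv_of i ih =>
      rw [show Φ n (FreeGroup.of i)⁻¹ = (Φ n (FreeGroup.of i))⁻¹ from map_inv _ _]
      have hs : ∀ j, ((Φ n (FreeGroup.of i))⁻¹).2 j =
          -((Φ n (FreeGroup.of i)).2 j *
            MonoidAlgebra.of ℤ (FreeGroup (Fin n)) ((Φ n (FreeGroup.of i)).1)⁻¹) := fun j => rfl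
      simp only [hs]
      simp only [Φ_of]
      rw [Finset.sum_eq_single i
        (fun b _ hb => by rw [Pi.single_eq_of_ne hb, zero_mul, neg_zero, mul_zero])
        (fun h => absurd (Finset.mem_univ i) h),
        Pi.single_eq_same, one_mul, mul_neg, sub_mul, one_mul, ← map_mul, mul_inv_cancel, map_one]
      noncomm_ring
  | mul u v ihu ihv =>
      rw [map_mul, map_mul (Φ n) u v]
      have h2 : ∀ i : Fin n, (Φ n u * Φ n v).2 i =
          (Φ n u).2 i * MonoidAlgebra.of ℤ (FreeGroup (Fin n)) v + (Φ n v).2 i := by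
        intro i; rw [mul_snd, Φ_fst]
      simp only [h2, mul_add, Finset.sum_add_distrib, ← mul_assoc, ← Finset.sum_mul, ← ihu, ← ihv]
      noncomm_ring

/-- Linear "i-th partial derivative" on the group ring. -/
noncomputable def Dl (i : Fin n) : MonoidAlgebra ℤ (FreeGroup (Fin n)) →ₗ[ℤ] MonoidAlgebra ℤ (FreeGroup (Fin n)) :=
  Finsupp.lift _ ℤ _ (fun g => (Φ n g).2 i) ∘ₗ (MonoidAlgebra.coeffLinearEquiv ℤ).toLinearMap

theorem Dl_single (i : Fin n) (g : FreeGroup (Fin n)) (c : ℤ) :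
    Dl i (MonoidAlgebra.single g c) = c • (Φ n g).2 i := by
  show (Finsupp.lift _ ℤ _ (fun g => (Φ n g).2 i)) (Finsupp.single g c) = _
  rw [Finsupp.lift_apply, Finsupp.sum_single_index (by simp)]

theorem Dl_genmul (i j : Fin n) (x : MonoidAlgebra ℤ (FreeGroup (Fin n))) :
    Dl i (MonoidAlgebra.of ℤ (FreeGroup (Fin n)) (FreeGroup.of j) * x) =
      (if i = j then x else 0) + Dl i x := by
  induction x using MonoidAlgebra.induction_linear with
  | zero => simp
  | add a b ha hb =>
      rw [mul_add, map_add, ha, hb, map_add]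
      split <;> abel
  | single g c =>
      have h1 : MonoidAlgebra.of ℤ (FreeGroup (Fin n)) (FreeGroup.of j) * MonoidAlgebra.single g c =
          MonoidAlgebra.single (FreeGroup.of j * g) c := by
        rw [MonoidAlgebra.of_apply, MonoidAlgebra.single_mul_single, one_mul]
      rw [h1, Dl_single, Dl_single, map_mul, mul_snd, Φ_fst, Φ_of]
      simp only [Pi.single_apply, ite_mul, one_mul, zero_mul, smul_add]
      split
      · rw [MonoidAlgebra.of_apply, MonoidAlgebra.smul_single, smul_eq_mul, mul_one]
      · simp

theorem Dl_one (i : Fin n) : Dl i (1 : MonoidAlgebra ℤ (FreeGroup (Fin n))) = 0 := by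
  rw [show (1 : MonoidAlgebra ℤ (FreeGroup (Fin n))) = MonoidAlgebra.single 1 1 from rfl,
    Dl_single, map_one]
  simp [show ((1 : G n).2) = 0 from rfl]

theorem Dl_key (i : Fin n) (E : Fin n → MonoidAlgebra ℤ (FreeGroup (Fin n))) :
    Dl i (∑ j : Fin n,
      (1 - MonoidAlgebra.of ℤ (FreeGroup (Fin n)) (FreeGroup.of j)) * E j) = -E i := by
  rw [map_sum]
  have h : ∀ j, Dl i ((1 - MonoidAlgebra.of ℤ (FreeGroup (Fin n)) (FreeGroup.of j)) * E j)
      = -(if i = j then E j else 0) := by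
    intro j
    rw [sub_mul, one_mul, map_sub, Dl_genmul]
    abel
  simp only [h]
  simp [Finset.sum_ite_eq]

end FoxAux

/-- **Fox derivatives exist and are unique.**
For the free group `F` on generators `g_1, …, g_n` and any `g ∈ F`, there exist
unique elements `∂g/∂g_i ∈ ℤ[F]` with `1 - g = ∑ i, (1 - g_i) * (∂g/∂g_i)`. -/
theorem fox_derivative_exists_unique (n : ℕ) (g : FreeGroup (Fin n)) :
    ∃! D : Fin n → MonoidAlgebra ℤ (FreeGroup (Fin n)),
      1 - MonoidAlgebra.of ℤ (FreeGroup (Fin n)) g =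
        ∑ i : Fin n,
          (1 - MonoidAlgebra.of ℤ (FreeGroup (Fin n)) (FreeGroup.of i)) * D i := by
  refine ⟨fun i => (FoxAux.Φ n g).2 i, FoxAux.main g, ?_⟩
  intro E hE
  funext i
  have h1 := FoxAux.Dl_key i E
  have h2 := FoxAux.Dl_key i (fun j => (FoxAux.Φ n g).2 j)
  rw [← hE] at h1
  rw [← FoxAux.main g] at h2
  exact neg_inj.mp (h1.symm.trans h2)
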